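/- If θ_v ∈ (0, π/2) satisfies cos θ_v = √(μ/(μ+3)), then θ_v is a critical point of V, i.e. V′(θ_v) = 0, where V(θ) = GM·√(M/2)·(M/cos θ + 4m/√(cos²θ + μ sin²θ)). -/

import Mathlib

open Real

theorem stmt_2 (G M m μ : ℝ) (hG : 0 < G) (hM : 0 < M) (hm : 0 < m)
    (hμ : μ = (2*M + m)/m) (V : ℝ → ℝ)
    (hV : ∀ θ, V θ = G*M*Real.sqrt (M/2) *
      (M / Real.cos θ + 4*m / Real.sqrt (Real.cos θ^2 + μ * Real.sin θ^2)))
    (θv : ℝ) (hθv : θv ∈ Set.Ioo 0 (Real.pi/2))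
    (hcos : Real.cos θv = Real.sqrt (μ/(μ+3))) :
    deriv V θv = 0 := by
  obtain ⟨h0, h2⟩ := hθv
  have hpi := Real.pi_pos
  have hc : 0 < Real.cos θv := Real.cos_pos_of_mem_Ioo ⟨by linarith, h2⟩
  have hs : 0 < Real.sin θv := Real.sin_pos_of_pos_of_lt_pi h0 (by linarith)
  have hμ1 : 1 < μ := by
    rw [hμ]; rw [lt_div_iff₀ hm]; linarith
  have hμ3 : (0:ℝ) < μ + 3 := by linarith
  have hc2 : Real.cos θv ^ 2 = μ / (μ + 3) := by
    rw [hcos, Real.sq_sqrt (by positivity)]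
  have hs2 : Real.sin θv ^ 2 = 1 - Real.cos θv ^ 2 := by
    nlinarith [Real.sin_sq_add_cos_sq θv]
  have hc2' : (μ + 3) * Real.cos θv ^ 2 = μ := by
    rw [hc2]; field_simp
  have hg : Real.cos θv ^ 2 + μ * Real.sin θv ^ 2 = (2 * Real.cos θv) ^ 2 := by
    nlinarith [hc2', hs2]
  have hgpos : 0 < Real.cos θv ^ 2 + μ * Real.sin θv ^ 2 := by
    rw [hg]; positivity
  have hsqrtg : Real.sqrt (Real.cos θv ^ 2 + μ * Real.sin θv ^ 2) = 2 * Real.cos θv := by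
    rw [hg, Real.sqrt_sq (by positivity)]
  have h1 : HasDerivAt (fun θ => M / Real.cos θ)
      ((0 * Real.cos θv - M * (-Real.sin θv)) / Real.cos θv ^ 2) θv :=
    (hasDerivAt_const θv M).div (Real.hasDerivAt_cos θv) (ne_of_gt hc)
  have h2g : HasDerivAt (fun θ => Real.cos θ ^ 2 + μ * Real.sin θ ^ 2)
      (2 * Real.sin θv * Real.cos θv * (μ - 1)) θv := by
    have hc' := (Real.hasDerivAt_cos θv).pow 2
    have hs' := ((Real.hasDerivAt_sin θv).pow 2).const_mul μ
    convert hc'.add hs' using 1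
    · rfl
    · rfl
    · funext θ; simp
    · rw [show (2:ℕ) - 1 = 1 from rfl]; push_cast; ring
  have h2s : HasDerivAt (fun θ => Real.sqrt (Real.cos θ ^ 2 + μ * Real.sin θ ^ 2))
      (2 * Real.sin θv * Real.cos θv * (μ - 1) /
        (2 * Real.sqrt (Real.cos θv ^ 2 + μ * Real.sin θv ^ 2))) θv :=
    h2g.sqrt (ne_of_gt hgpos)
  have hsg_ne : Real.sqrt (Real.cos θv ^ 2 + μ * Real.sin θv ^ 2) ≠ 0 := by
    rw [hsqrtg]; positivity
  have h3 : HasDerivAt (fun θ => 4 * m / Real.sqrt (Real.cos θ ^ 2 + μ * Real.sin θ ^ 2))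
      ((0 * Real.sqrt (Real.cos θv ^ 2 + μ * Real.sin θv ^ 2) -
        (4 * m) * (2 * Real.sin θv * Real.cos θv * (μ - 1) /
          (2 * Real.sqrt (Real.cos θv ^ 2 + μ * Real.sin θv ^ 2)))) /
        (Real.sqrt (Real.cos θv ^ 2 + μ * Real.sin θv ^ 2)) ^ 2) θv :=
    (hasDerivAt_const θv (4 * m)).div h2s hsg_ne
  have hVeq : V = fun θ => G*M*Real.sqrt (M/2) *
      (M / Real.cos θ + 4*m / Real.sqrt (Real.cos θ^2 + μ * Real.sin θ^2)) := funext hV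
  have hD := ((h1.add h3).const_mul (G*M*Real.sqrt (M/2)))
  rw [hVeq, (show HasDerivAt (fun θ => G*M*Real.sqrt (M/2) *
      (M / Real.cos θ + 4*m / Real.sqrt (Real.cos θ^2 + μ * Real.sin θ^2))) _ θv from hD).deriv]
  rw [hsqrtg]
  have hmne : m ≠ 0 := ne_of_gt hm
  have hcne : Real.cos θv ≠ 0 := ne_of_gt hc
  have hμval : μ - 1 = 2 * M / m := by
    rw [hμ]; field_simp; ring
  rw [hμval]
  field_simp
  ring
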